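/- arXiv:2301.09587 — 2 statements merged into one kernel-verified Lean document; each statement's English description precedes it below -/
import Mathlib

section
/- Let n be a non-negative integer, let j be an integer with 0 ≤ j ≤ n, and let α and β be complex numbers that are not negative integers. Then ∑_{k=0}^{n} (−1)^{k+j} · C(β+k, k) · C(k, j) · C(α, n−k) = (−1)^{n+j} · C(β+j, j) · C(β−α+n, n−j), where C(k,j) is the ordinary binomial coefficient of natural numbers. -/
open Finset

/-- Generalized binomial coefficient `C(z,k) = z(z-1)⋯(z-k+1)/k!`. -/
noncomputable def cchoose (z : ℂ) (k : ℕ) : ℂ :=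
  (∏ i ∈ Finset.range k, (z - i)) / (k.factorial : ℂ)

open Polynomial

lemma descPoch_smeval (z : ℂ) : ∀ k : ℕ,
    (descPochhammer ℤ k).smeval z = ∏ i ∈ range k, (z - i)
  | 0 => by simp [descPochhammer_zero, Polynomial.smeval_one]
  | (k+1) => by
      rw [descPochhammer_succ_right, Polynomial.smeval_mul, descPoch_smeval z k,
        prod_range_succ]
      congr 1
      simp [Polynomial.smeval_sub, Polynomial.smeval_X, Polynomial.smeval_natCast]

lemma cchoose_eq_choose (z : ℂ) (k : ℕ) : cchoose z k = Ring.choose z k := by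
  have h := Ring.descPochhammer_eq_factorial_smul_choose (R := ℂ) z k
  rw [descPoch_smeval] at h
  have hk : (k.factorial : ℂ) ≠ 0 := by exact_mod_cast k.factorial_ne_zero
  rw [cchoose, h, nsmul_eq_mul]
  field_simp

lemma cchoose_neg (γ : ℂ) (k : ℕ) :
    cchoose (γ + k) k = (-1) ^ k * cchoose (-γ - 1) k := by
  unfold cchoose
  have h1 : ∏ i ∈ range k, (γ + k - i) = ∏ i ∈ range k, (γ + 1 + i) := by
    rw [← Finset.prod_range_reflect (fun i => γ + 1 + (i : ℂ)) k]
    refine Finset.prod_congr rfl fun i hi => ?_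
    have hik : i < k := mem_range.mp hi
    have : ((k - 1 - i : ℕ) : ℂ) = (k : ℂ) - 1 - i := by
      push_cast [Nat.cast_sub (by omega : i ≤ k - 1), Nat.cast_sub (by omega : 1 ≤ k)]
      ring
    rw [this]; ring
  have h2 : ∏ i ∈ range k, (-γ - 1 - (i : ℂ)) = (-1) ^ k * ∏ i ∈ range k, (γ + 1 + i) := by
    calc ∏ i ∈ range k, (-γ - 1 - (i : ℂ)) = ∏ i ∈ range k, (-1) * (γ + 1 + i) := by
          refine Finset.prod_congr rfl fun i _ => by ring
      _ = (-1) ^ k * ∏ i ∈ range k, (γ + 1 + i) := by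
          rw [Finset.prod_mul_distrib, prod_const, card_range]
  rw [h1, h2]
  rw [mul_div_assoc, ← mul_assoc, ← mul_pow]
  simp

theorem stmt_1 (n j : ℕ) (hj : j ≤ n) (α β : ℂ)
    (hα : ∀ m : ℕ, α ≠ -((m : ℂ) + 1)) (hβ : ∀ m : ℕ, β ≠ -((m : ℂ) + 1)) :
    ∑ k ∈ range (n + 1), (-1 : ℂ) ^ (k + j) * cchoose (β + k) k *
        (k.choose j : ℂ) * cchoose α (n - k) =
      (-1 : ℂ) ^ (n + j) * cchoose (β + j) j * cchoose (β - α + n) (n - j) := by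
  -- Vandermonde in range form
  have vdm : ∀ (x y : ℂ) (M : ℕ), ∑ m ∈ range (M + 1),
      Ring.choose x m * Ring.choose y (M - m) = Ring.choose (x + y) M := by
    intro x y M
    rw [Ring.add_choose_eq M (Commute.all x y), Finset.Nat.sum_antidiagonal_eq_sum_range_succ_mk]
  -- rewrite LHS
  calc ∑ k ∈ range (n + 1), (-1 : ℂ) ^ (k + j) * cchoose (β + k) k *
        (k.choose j : ℂ) * cchoose α (n - k)
      = ∑ k ∈ range (n + 1), (-1 : ℂ) ^ j * ((k.choose j : ℂ) * Ring.choose (-β - 1) k)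
          * Ring.choose α (n - k) := by
        refine Finset.sum_congr rfl fun k _ => ?_
        rw [cchoose_neg β k, cchoose_eq_choose, cchoose_eq_choose]
        rw [show (-1 : ℂ) ^ (k + j) = (-1) ^ k * (-1) ^ j from pow_add _ _ _]
        have h4 : ((-1 : ℂ)) ^ k * (-1) ^ k = 1 := by rw [← mul_pow]; simp
        linear_combination ((-1 : ℂ)) ^ j * Ring.choose (-β - 1) k * (k.choose j : ℂ) *
          Ring.choose α (n - k) * h4
    _ = ∑ k ∈ Ico j (n + 1), (-1 : ℂ) ^ j * ((k.choose j : ℂ) * Ring.choose (-β - 1) k)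
          * Ring.choose α (n - k) := by
        refine (Finset.sum_subset (fun x hx => mem_range.mpr (mem_Ico.mp hx).2) ?_).symm
        intro x hx hx'
        simp only [mem_range, mem_Ico, not_and, not_lt] at hx hx'
        rw [Nat.choose_eq_zero_of_lt (by omega)]
        simp
    _ = ∑ k ∈ Ico j (n + 1), (-1 : ℂ) ^ j *
          (Ring.choose (-β - 1) j * Ring.choose (-β - 1 - j) (k - j)) * Ring.choose α (n - k) := by
        refine Finset.sum_congr rfl fun k hk => ?_
        have hjk : j ≤ k := (mem_Ico.mp hk).1
        have := Ring.choose_smul_choose (-β - 1 : ℂ) (n := k) (k := j) hjk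
        rw [nsmul_eq_mul] at this
        rw [this]
    _ = (-1 : ℂ) ^ j * Ring.choose (-β - 1) j *
          ∑ k ∈ Ico j (n + 1), Ring.choose (-β - 1 - j) (k - j) * Ring.choose α (n - k) := by
        rw [Finset.mul_sum]
        exact Finset.sum_congr rfl fun k _ => by ring
    _ = (-1 : ℂ) ^ j * Ring.choose (-β - 1) j *
          ∑ m ∈ range (n - j + 1), Ring.choose (-β - 1 - j) m * Ring.choose α (n - j - m) := by
        congr 1
        rw [Finset.sum_Ico_eq_sum_range]
        have : n + 1 - j = n - j + 1 := by omega
        rw [this]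
        refine Finset.sum_congr rfl fun m hm => ?_
        congr 2
        · omega
        · omega
    _ = (-1 : ℂ) ^ j * Ring.choose (-β - 1) j * Ring.choose ((-β - 1 - j) + α) (n - j) := by
        rw [vdm]
    _ = (-1 : ℂ) ^ (n + j) * cchoose (β + j) j * cchoose (β - α + n) (n - j) := by
        rw [show (β + j : ℂ) = β + (j : ℕ) from rfl, cchoose_neg β j,
          show (β - α + n : ℂ) = (β - α + j) + ((n - j : ℕ) : ℂ) by
            rw [Nat.cast_sub hj]; ring]
        rw [cchoose_neg (β - α + j) (n - j), cchoose_eq_choose, cchoose_eq_choose]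
        rw [show (-(β - α + j) - 1 : ℂ) = (-β - 1 - j) + α by ring]
        have hsign : ((-1 : ℂ)) ^ (n + j) * (-1) ^ j * (-1) ^ (n - j) = (-1) ^ j := by
          rw [← pow_add, ← pow_add, show n + j + j + (n - j) = 2 * n + j from by omega,
            pow_add, pow_mul]
          simp
        linear_combination (-(Ring.choose (-β - 1 : ℂ) j *
          Ring.choose ((-β - 1 - j) + α) (n - j))) * hsign
end

section
/- For every non-negative integer n, the n-th harmonic number satisfies H_n = (1/2) · ∑_{k=1}^{n} (−1)^{n+k} · C(n,k) · C(n+k, k) · H_k, where C(a,b) denotes the ordinary binomial coefficient. -/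
open Finset

/-- The `n`-th harmonic number `H_n = ∑_{j=1}^n 1/j`, with `H_0 = 0`. -/
noncomputable def H (n : ℕ) : ℝ :=
  ∑ j ∈ Finset.range n, 1 / ((j : ℝ) + 1)

lemma H_zero : H 0 = 0 := by simp [H]

lemma H_succ (n : ℕ) : H (n + 1) = H n + 1 / ((n : ℝ) + 1) := by
  simp [H, Finset.sum_range_succ]

/-- Pascal split for alternating sums. -/
lemma pascal_split (f : ℕ → ℝ) (N : ℕ) :
    ∑ s ∈ range (N + 2), (-1 : ℝ) ^ s * ((N + 1).choose s : ℝ) * f s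
      = ∑ s ∈ range (N + 1), (-1 : ℝ) ^ s * (N.choose s : ℝ) * f s
        - ∑ s ∈ range (N + 1), (-1 : ℝ) ^ s * (N.choose s : ℝ) * f (s + 1) := by
  rw [Finset.sum_range_succ' (fun s => (-1 : ℝ) ^ s * ((N + 1).choose s : ℝ) * f s) (N + 1)]
  have h1 : ∀ s, ((N + 1).choose (s + 1) : ℝ) = (N.choose s : ℝ) + (N.choose (s + 1) : ℝ) := by
    intro s
    rw [Nat.choose_succ_succ]
    push_cast; ring
  have h2 : ∑ s ∈ range (N + 1), (-1 : ℝ) ^ (s + 1) * ((N + 1).choose (s + 1) : ℝ) * f (s + 1)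
      = (∑ s ∈ range (N + 1), (-1 : ℝ) ^ (s + 1) * (N.choose (s + 1) : ℝ) * f (s + 1))
        - ∑ s ∈ range (N + 1), (-1 : ℝ) ^ s * (N.choose s : ℝ) * f (s + 1) := by
    rw [← Finset.sum_sub_distrib]
    apply Finset.sum_congr rfl
    intro s _
    rw [h1]
    ring
  rw [h2]
  have h3 : ∑ s ∈ range (N + 1), (-1 : ℝ) ^ (s + 1) * (N.choose (s + 1) : ℝ) * f (s + 1)
      = (∑ s ∈ range (N + 2), (-1 : ℝ) ^ s * (N.choose s : ℝ) * f s)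
        - (-1 : ℝ) ^ 0 * (N.choose 0 : ℝ) * f 0 := by
    rw [Finset.sum_range_succ' (fun s => (-1 : ℝ) ^ s * (N.choose s : ℝ) * f s) (N + 1)]
    ring
  rw [h3]
  have h4 : ∑ s ∈ range (N + 2), (-1 : ℝ) ^ s * (N.choose s : ℝ) * f s
      = ∑ s ∈ range (N + 1), (-1 : ℝ) ^ s * (N.choose s : ℝ) * f s := by
    rw [Finset.sum_range_succ]
    simp [Nat.choose_succ_self]
  rw [h4]
  simp
  ring

/-- Factorial arithmetic step used in the inductions. -/
lemma fact_step (N i : ℕ) :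
    ((N.factorial : ℝ) * i.factorial / (N + i + 1).factorial)
      - (N.factorial : ℝ) * (i + 1).factorial / (N + i + 2).factorial
    = ((N + 1).factorial : ℝ) * i.factorial / (N + i + 2).factorial := by
  have e1 : (N + i + 2).factorial = (N + i + 2) * (N + i + 1).factorial := by
    rw [show N + i + 2 = (N + i + 1) + 1 by ring, Nat.factorial_succ]
  have e2 : (i + 1).factorial = (i + 1) * i.factorial := Nat.factorial_succ i
  have e3 : (N + 1).factorial = (N + 1) * N.factorial := Nat.factorial_succ N
  have p1 : ((N + i + 1).factorial : ℝ) ≠ 0 := by positivity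
  have p2 : ((N + i + 2 : ℕ) : ℝ) ≠ 0 := by positivity
  rw [e1, e2, e3]
  push_cast
  field_simp
  ring

/-- Alternating "beta" sum. -/
lemma beta_sum (N : ℕ) : ∀ i : ℕ,
    ∑ s ∈ range (N + 1), (-1 : ℝ) ^ s * (N.choose s : ℝ) / ((s : ℝ) + i + 1)
      = (N.factorial : ℝ) * i.factorial / (N + i + 1).factorial := by
  induction N with
  | zero =>
    intro i
    simp [Nat.factorial]
    rw [show ((i : ℝ) + 1) = ((i + 1 : ℕ) : ℝ) by push_cast; ring]
    have hf : (i.factorial : ℝ) ≠ 0 := by positivity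
    have h2 : (((i + 1 : ℕ)) : ℝ) ≠ 0 := by positivity
    field_simp
  | succ N ih =>
    intro i
    have hs := pascal_split (fun s => 1 / ((s : ℝ) + i + 1)) N
    have conv1 : ∀ (m : ℕ) (g : ℕ → ℝ), ∑ s ∈ range m, (-1 : ℝ) ^ s * g s * (1 / ((s : ℝ) + i + 1))
        = ∑ s ∈ range m, (-1 : ℝ) ^ s * g s / ((s : ℝ) + i + 1) := by
      intro m g; apply Finset.sum_congr rfl; intro s _; ring
    have key : ∑ s ∈ range (N + 2), (-1 : ℝ) ^ s * ((N + 1).choose s : ℝ) / ((s : ℝ) + i + 1)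
        = (∑ s ∈ range (N + 1), (-1 : ℝ) ^ s * (N.choose s : ℝ) / ((s : ℝ) + i + 1))
          - ∑ s ∈ range (N + 1), (-1 : ℝ) ^ s * (N.choose s : ℝ) / ((s : ℝ) + ((i + 1 : ℕ) : ℝ) + 1) := by
      rw [← conv1, ← conv1]
      rw [hs]
      congr 1
      apply Finset.sum_congr rfl
      intro s _
      push_cast
      ring_nf
    rw [key, ih i, ih (i + 1)]
    have := fact_step N i
    rw [show N + 1 + i + 1 = N + i + 2 by ring, show N + (i + 1) + 1 = N + i + 2 by ring]
    exact this

/-- Alternating binomial transform of shifted harmonic numbers. -/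
lemma G_sum (M : ℕ) : ∀ i : ℕ,
    ∑ m ∈ range (M + 2), (-1 : ℝ) ^ m * ((M + 1).choose m : ℝ) * H (m + i)
      = -((M.factorial : ℝ) * i.factorial / (M + 1 + i).factorial) := by
  induction M with
  | zero =>
    intro i
    rw [Finset.sum_range_succ, Finset.sum_range_succ, Finset.sum_range_zero]
    simp only [Nat.choose_self, Nat.choose_zero_right, Nat.choose_one_right]
    rw [show 1 + i = i + 1 by ring, H_succ]
    have hf : (i.factorial : ℝ) ≠ 0 := by positivity
    have h2 : ((i : ℝ) + 1) ≠ 0 := by positivity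
    rw [show (i + 1).factorial = (i + 1) * i.factorial from Nat.factorial_succ i,
      show (0 : ℕ) + i = i by ring]
    simp [Nat.factorial]
    push_cast
    field_simp
  | succ M ih =>
    intro i
    have hs := pascal_split (fun m => H (m + i)) (M + 1)
    rw [show M + 1 + 2 = M + 3 by ring] at hs
    rw [hs]
    have e2 : ∑ m ∈ range (M + 2), (-1 : ℝ) ^ m * ((M + 1).choose m : ℝ) * H (m + 1 + i)
        = ∑ m ∈ range (M + 2), (-1 : ℝ) ^ m * ((M + 1).choose m : ℝ) * H (m + (i + 1)) := by
      apply Finset.sum_congr rfl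
      intro m _
      rw [show m + 1 + i = m + (i + 1) by ring]
    rw [e2, ih i, ih (i + 1)]
    have hstep := fact_step M i
    rw [show M + 1 + i = M + i + 1 by ring, show M + 1 + (i + 1) = M + i + 2 by ring,
      show M + 1 + 1 + i = M + i + 2 by ring]
    push_cast [Nat.factorial_succ] at hstep ⊢
    linarith [hstep]

/-- Classical: `∑_{s=1}^n (-1)^{s+1} C(n,s)/s = H n`. -/
lemma L_one : ∀ n : ℕ,
    ∑ i ∈ range n, (-1 : ℝ) ^ i * (n.choose (i + 1) : ℝ) / ((i : ℝ) + 1) = H n := by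
  intro n
  induction n with
  | zero => simp [H_zero]
  | succ n ih =>
    have split : ∑ i ∈ range (n + 1), (-1 : ℝ) ^ i * ((n + 1).choose (i + 1) : ℝ) / ((i : ℝ) + 1)
        = (∑ i ∈ range (n + 1), (-1 : ℝ) ^ i * (n.choose i : ℝ) / ((i : ℝ) + 1))
          + ∑ i ∈ range (n + 1), (-1 : ℝ) ^ i * (n.choose (i + 1) : ℝ) / ((i : ℝ) + 1) := by
      rw [← Finset.sum_add_distrib]
      apply Finset.sum_congr rfl
      intro i _
      rw [Nat.choose_succ_succ]
      push_cast
      ring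
    rw [split]
    have hA : ∑ i ∈ range (n + 1), (-1 : ℝ) ^ i * (n.choose i : ℝ) / ((i : ℝ) + 1)
        = 1 / ((n : ℝ) + 1) := by
      have hb := beta_sum n 0
      simp only [Nat.cast_zero, Nat.factorial_zero, Nat.cast_one] at hb
      rw [show ∑ i ∈ range (n + 1), (-1 : ℝ) ^ i * (n.choose i : ℝ) / ((i : ℝ) + 1)
          = ∑ s ∈ range (n + 1), (-1 : ℝ) ^ s * (n.choose s : ℝ) / ((s : ℝ) + 0 + 1) by
        apply Finset.sum_congr rfl; intro i _; norm_num]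
      rw [hb]
      rw [show n + 0 + 1 = n + 1 by ring, Nat.factorial_succ]
      have hf : (n.factorial : ℝ) ≠ 0 := by positivity
      push_cast
      field_simp
    have hB : ∑ i ∈ range (n + 1), (-1 : ℝ) ^ i * (n.choose (i + 1) : ℝ) / ((i : ℝ) + 1)
        = H n := by
      rw [Finset.sum_range_succ, Nat.choose_succ_self]
      simpa using ih
    rw [hA, hB, H_succ]
    ring

lemma neg_one_pow_congr' (a b : ℕ) (h : a % 2 = b % 2) : (-1 : ℝ) ^ a = (-1 : ℝ) ^ b := by
  rw [neg_one_pow_eq_pow_mod_two, h, ← neg_one_pow_eq_pow_mod_two]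

/-- Vandermonde variant: `C(n+k, k) = ∑_i C(n,i) C(k,i)`. -/
lemma vand (n k : ℕ) : (n + k).choose k = ∑ i ∈ range (n + 1), n.choose i * k.choose i := by
  have h1 : (n + k).choose k = (n + k).choose n := by
    have := Nat.choose_symm (Nat.le_add_left k n)
    rw [Nat.add_sub_cancel] at this
    omega
  rw [h1, Nat.add_choose_eq]
  rw [Finset.Nat.sum_antidiagonal_eq_sum_range_succ_mk]
  have h2 := Finset.sum_range_reflect (fun i => n.choose i * k.choose (n - i)) (n + 1)
  simp only [Nat.add_sub_cancel] at h2
  rw [← h2]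
  apply Finset.sum_congr rfl
  intro j hj
  have hj' : j ≤ n := by
    have := Finset.mem_range.mp hj; omega
  rw [Nat.choose_symm hj', Nat.sub_sub_self hj']

lemma inner_eval (n i : ℕ) (hi : i ≤ n) :
    ∑ k ∈ range (n + 1), (-1 : ℝ) ^ (n + k) * (n.choose k : ℝ)
        * ((n.choose i : ℝ) * (k.choose i : ℝ)) * H k
      = (n.choose i : ℝ) ^ 2 * (-1 : ℝ) ^ (n + i)
        * ∑ m ∈ range (n - i + 1), (-1 : ℝ) ^ m * ((n - i).choose m : ℝ) * H (m + i) := by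
  have hrestrict : ∑ k ∈ Finset.Icc i n, (-1 : ℝ) ^ (n + k) * (n.choose k : ℝ)
        * ((n.choose i : ℝ) * (k.choose i : ℝ)) * H k
      = ∑ k ∈ range (n + 1), (-1 : ℝ) ^ (n + k) * (n.choose k : ℝ)
        * ((n.choose i : ℝ) * (k.choose i : ℝ)) * H k := by
    apply Finset.sum_subset
    · intro x hx
      simp only [Finset.mem_Icc] at hx
      simp only [Finset.mem_range]
      omega
    · intro x hx hnx
      simp only [Finset.mem_range] at hx
      simp only [Finset.mem_Icc] at hnx
      have hxi : x < i := by omega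
      rw [Nat.choose_eq_zero_of_lt hxi]
      simp
  rw [← hrestrict]
  rw [← Finset.Ico_add_one_right_eq_Icc, Finset.sum_Ico_eq_sum_range]
  rw [show n + 1 - i = n - i + 1 by omega]
  rw [Finset.mul_sum]
  apply Finset.sum_congr rfl
  intro m hm
  have hm' : m ≤ n - i := by
    have := Finset.mem_range.mp hm; omega
  have hmn : i + m ≤ n := by omega
  have hcm := Nat.choose_mul (n := n) (Nat.le_add_right i m)
  rw [Nat.add_sub_cancel_left] at hcm
  have hcast : ((n.choose (i + m) : ℝ)) * ((i + m).choose i : ℝ)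
      = (n.choose i : ℝ) * ((n - i).choose m : ℝ) := by
    rw [← Nat.cast_mul, ← Nat.cast_mul, hcm]
  have hsign : (-1 : ℝ) ^ (n + (i + m)) = (-1 : ℝ) ^ (n + i) * (-1 : ℝ) ^ m := by
    rw [show n + (i + m) = (n + i) + m by ring, pow_add]
  rw [hsign, show i + m = m + i by ring] at *
  linear_combination ((-1 : ℝ) ^ (n + i) * (-1 : ℝ) ^ m * (n.choose i : ℝ) * H (m + i)) * hcast

theorem stmt_11 (n : ℕ) :
    H n = (1 / 2) * ∑ k ∈ Finset.Icc 1 n, (-1 : ℝ) ^ (n + k) *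
      (n.choose k : ℝ) * ((n + k).choose k : ℝ) * H k := by
  suffices hS : ∑ k ∈ Finset.Icc 1 n, (-1 : ℝ) ^ (n + k) *
      (n.choose k : ℝ) * ((n + k).choose k : ℝ) * H k = 2 * H n by
    rw [hS]; ring
  have hext : ∑ k ∈ Finset.Icc 1 n, (-1 : ℝ) ^ (n + k) *
      (n.choose k : ℝ) * ((n + k).choose k : ℝ) * H k
      = ∑ k ∈ range (n + 1), (-1 : ℝ) ^ (n + k) *
      (n.choose k : ℝ) * ((n + k).choose k : ℝ) * H k := by
    have hr : range (n + 1) = insert 0 (Finset.Icc 1 n) := by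
      ext x; simp only [Finset.mem_range, Finset.mem_insert, Finset.mem_Icc]; omega
    rw [hr, Finset.sum_insert (by simp)]
    simp [H_zero]
  rw [hext]
  have hexp : ∑ k ∈ range (n + 1), (-1 : ℝ) ^ (n + k) *
      (n.choose k : ℝ) * ((n + k).choose k : ℝ) * H k
      = ∑ i ∈ range (n + 1), ∑ k ∈ range (n + 1), (-1 : ℝ) ^ (n + k) * (n.choose k : ℝ)
        * ((n.choose i : ℝ) * (k.choose i : ℝ)) * H k := by
    rw [Finset.sum_comm]
    apply Finset.sum_congr rfl
    intro k _
    have hv : ((n + k).choose k : ℝ) = ∑ i ∈ range (n + 1), (n.choose i : ℝ) * (k.choose i : ℝ) := by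
      rw [vand]; push_cast; rfl
    rw [hv, Finset.mul_sum, Finset.sum_mul]
  rw [hexp]
  have heval : ∑ i ∈ range (n + 1), ∑ k ∈ range (n + 1), (-1 : ℝ) ^ (n + k) * (n.choose k : ℝ)
        * ((n.choose i : ℝ) * (k.choose i : ℝ)) * H k
      = ∑ i ∈ range (n + 1), (n.choose i : ℝ) ^ 2 * (-1 : ℝ) ^ (n + i)
        * ∑ m ∈ range (n - i + 1), (-1 : ℝ) ^ m * ((n - i).choose m : ℝ) * H (m + i) := by
    apply Finset.sum_congr rfl
    intro i hi
    exact inner_eval n i (by have := Finset.mem_range.mp hi; omega)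
  rw [heval, Finset.sum_range_succ]
  have hlast : (n.choose n : ℝ) ^ 2 * (-1 : ℝ) ^ (n + n)
        * ∑ m ∈ range (n - n + 1), (-1 : ℝ) ^ m * ((n - n).choose m : ℝ) * H (m + n) = H n := by
    rw [Nat.sub_self, Nat.choose_self, neg_one_pow_congr' (n + n) 0 (by omega)]
    simp
  rw [hlast]
  have hmain : ∀ i ∈ range n, (n.choose i : ℝ) ^ 2 * (-1 : ℝ) ^ (n + i)
        * ∑ m ∈ range (n - i + 1), (-1 : ℝ) ^ m * ((n - i).choose m : ℝ) * H (m + i)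
      = (-1 : ℝ) ^ (n + i + 1) * (n.choose i : ℝ) / ((n - i : ℕ) : ℝ) := by
    intro i hi
    have hi' : i < n := Finset.mem_range.mp hi
    have h1 : n - i = (n - i - 1) + 1 := by omega
    rw [h1, G_sum (n - i - 1) i, show n - i - 1 + 1 + i = n by omega]
    -- now simplify the factorial expression
    have hfact := Nat.choose_mul_factorial_mul_factorial (le_of_lt hi')
    have hfc : (n.choose i : ℝ) * (i.factorial : ℝ) * (((n - i).factorial : ℝ)) = (n.factorial : ℝ) := by
      exact_mod_cast congrArg (fun x : ℕ => (x : ℝ)) hfact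
    have h2c : (((n - i) : ℕ).factorial : ℝ) = (((n - i) : ℕ) : ℝ) * (((n - i - 1)).factorial : ℝ) := by
      rw [h1, Nat.factorial_succ]
      push_cast
      ring
    have hnf : (n.factorial : ℝ) ≠ 0 := by positivity
    have hni : (((n - i) : ℕ) : ℝ) ≠ 0 := by
      have : 0 < n - i := by omega
      positivity
    have hkey : (n.choose i : ℝ) * (i.factorial : ℝ) * (((n - i) : ℕ) : ℝ)
        * ((n - i - 1).factorial : ℝ) = (n.factorial : ℝ) := by
      rw [← hfc, h2c]; ring
    have hdd : (n.choose i : ℝ) ^ 2 * ((n - i - 1).factorial : ℝ) * (i.factorial : ℝ)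
        / (n.factorial : ℝ) = (n.choose i : ℝ) / (((n - i) : ℕ) : ℝ) := by
      rw [div_eq_div_iff hnf hni]
      linear_combination (n.choose i : ℝ) * hkey
    rw [show (n.choose i : ℝ) ^ 2 * (-1 : ℝ) ^ (n + i)
        * -(((n - i - 1).factorial : ℝ) * (i.factorial : ℝ) / (n.factorial : ℝ))
        = -((-1 : ℝ) ^ (n + i)) * ((n.choose i : ℝ) ^ 2 * ((n - i - 1).factorial : ℝ)
          * (i.factorial : ℝ) / (n.factorial : ℝ)) by ring, hdd, pow_succ]
    ring_nf
    rw [show 1 + (n - i - 1) = n - i by omega]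
  rw [Finset.sum_congr rfl hmain]
  have hrefl := Finset.sum_range_reflect
    (fun i => (-1 : ℝ) ^ (n + i + 1) * (n.choose i : ℝ) / ((n - i : ℕ) : ℝ)) n
  rw [← hrefl]
  have hterm : ∀ j ∈ range n, (-1 : ℝ) ^ (n + (n - 1 - j) + 1) * (n.choose (n - 1 - j) : ℝ)
        / ((n - (n - 1 - j) : ℕ) : ℝ)
      = (-1 : ℝ) ^ j * (n.choose (j + 1) : ℝ) / ((j : ℝ) + 1) := by
    intro j hj
    have hj' : j < n := Finset.mem_range.mp hj
    have e1 : n - (n - 1 - j) = j + 1 := by omega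
    have e2 : n.choose (n - 1 - j) = n.choose (j + 1) := by
      have := Nat.choose_symm (show j + 1 ≤ n by omega)
      rw [show n - (j + 1) = n - 1 - j by omega] at this
      exact this
    rw [e1, e2, neg_one_pow_congr' (n + (n - 1 - j) + 1) j (by omega)]
    push_cast
    ring
  rw [Finset.sum_congr rfl hterm, L_one]
  ring
end
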